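/- Let G = F(a,b) be the free group on two generators. The right ℤ[G]-submodule of ℤ[G] generated by the set X = { 1 − a } ∪ { 1 − w a^ε b^δ a^{−ε} b^{−δ} w^{−1} : w ∈ G, ε, δ ∈ {±1} } is not finitely generated as a right ℤ[G]-module. -/

import Mathlib

noncomputable section Stmt8Aux
open Finsupp MonoidAlgebra MulOpposite SemidirectProduct

abbrev Stmt8R := MonoidAlgebra ℤ (FreeGroup Bool)



/-- Shift automorphisms of `Multiplicative (ℤ →₀ ℤ)`. -/
def stmt8Shift : Multiplicative ℤ →* MulAut (Multiplicative (ℤ →₀ ℤ)) where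
  toFun z := AddEquiv.toMultiplicative (Finsupp.domCongr (Equiv.addLeft z.toAdd))
  map_one' := by
    apply MulEquiv.toMonoidHom_injective
    apply MonoidHom.ext; intro f
    show Multiplicative.ofAdd (equivMapDomain _ f.toAdd) = f
    apply Multiplicative.toAdd.injective
    ext n
    simp
    rfl
  map_mul' x y := by
    apply MulEquiv.toMonoidHom_injective
    apply MonoidHom.ext; intro f
    show Multiplicative.ofAdd (equivMapDomain _ f.toAdd)
      = Multiplicative.ofAdd (equivMapDomain _ (equivMapDomain _ f.toAdd))
    rw [← equivMapDomain_trans]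
    congr 2
    ext n
    simp [toAdd_mul, add_assoc]

lemma stmt8Shift_apply (z : ℤ) (f : ℤ →₀ ℤ) :
    stmt8Shift (Multiplicative.ofAdd z) (Multiplicative.ofAdd f)
      = Multiplicative.ofAdd (equivMapDomain (Equiv.addLeft z) f) := rfl



abbrev Stmt8W := SemidirectProduct (Multiplicative (ℤ →₀ ℤ)) (Multiplicative ℤ) stmt8Shift

def stmt8Phi : FreeGroup Bool →* Stmt8W :=
  FreeGroup.lift (fun x => if x then inl (Multiplicative.ofAdd (Finsupp.single (0:ℤ) (1:ℤ)))
    else inr (Multiplicative.ofAdd (1:ℤ)))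

@[simp] lemma stmt8Phi_a : stmt8Phi (FreeGroup.of true)
    = inl (Multiplicative.ofAdd (Finsupp.single (0:ℤ) (1:ℤ))) := by simp [stmt8Phi]

@[simp] lemma stmt8Phi_b : stmt8Phi (FreeGroup.of false)
    = inr (Multiplicative.ofAdd (1:ℤ)) := by simp [stmt8Phi]

def stmt8K (S₀ : Finset ℤ) : Subgroup Stmt8W where
  carrier := {x | x.right = 1 ∧ (x.left.toAdd).support ⊆ S₀}
  one_mem' := by simp
  mul_mem' := by
    rintro x y ⟨hx1, hx2⟩ ⟨hy1, hy2⟩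
    refine ⟨by simp [hx1, hy1], ?_⟩
    rw [mul_left, hx1, map_one, MulAut.one_apply, toAdd_mul]
    exact (Finsupp.support_add).trans (by
      intro i hi
      rcases Finset.mem_union.1 hi with h | h
      exacts [hx2 h, hy2 h])
  inv_mem' := by
    rintro x ⟨hx1, hx2⟩
    refine ⟨by simp [hx1], ?_⟩
    rw [inv_left, hx1, inv_one, map_one, MulAut.one_apply, toAdd_inv]
    simpa using hx2

lemma stmt8_phi_g (n : ℕ) :
    stmt8Phi ((FreeGroup.of false)^n * FreeGroup.of true * ((FreeGroup.of false)^n)⁻¹)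
      = inl (Multiplicative.ofAdd (Finsupp.single ((n:ℤ)+0) (1:ℤ))) := by
  rw [map_mul, map_mul, map_inv, map_pow, stmt8Phi_a, stmt8Phi_b, ← map_pow inr, ← map_inv inr]
  rw [← inl_aut]
  congr 1
  rw [← ofAdd_nsmul, nsmul_eq_mul, mul_one]
  rw [stmt8Shift_apply, equivMapDomain_single]
  rfl

lemma stmt8_exists_not_mem (T : Finset (FreeGroup Bool))
    (hT : ∀ t ∈ T, (stmt8Phi t).right = 1) :
    ∃ n : ℕ, (FreeGroup.of false)^n * FreeGroup.of true * ((FreeGroup.of false)^n)⁻¹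
      ∉ Subgroup.closure (T : Set (FreeGroup Bool)) := by
  classical
  set S₀ : Finset ℤ := T.biUnion (fun t => ((stmt8Phi t).left.toAdd).support) with hS₀
  have hcl : Subgroup.closure (T : Set (FreeGroup Bool)) ≤ (stmt8K S₀).comap stmt8Phi := by
    rw [Subgroup.closure_le]
    intro t ht
    exact ⟨hT t ht, fun i hi => Finset.mem_biUnion.2 ⟨t, ht, hi⟩⟩
  refine ⟨S₀.sup Int.natAbs + 1, fun hmem => ?_⟩
  have h2 := (hcl hmem).2
  rw [stmt8_phi_g] at h2
  have hn : (((S₀.sup Int.natAbs + 1 : ℕ) : ℤ) + 0) ∈ S₀ := by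
    apply h2
    simp [Finsupp.support_single_ne_zero]
  have := Finset.le_sup (f := Int.natAbs) hn
  simp only [add_zero, Int.natAbs_natCast] at this
  omega


/-- For a right ideal `I`, the set of `g` with `1 - g ∈ I` is a subgroup. -/
def stmt8D (I : Submodule Stmt8Rᵐᵒᵖ Stmt8R) : Subgroup (FreeGroup Bool) where
  carrier := {g | (1 : Stmt8R) - MonoidAlgebra.of ℤ (FreeGroup Bool) g ∈ I}
  one_mem' := by
    show (1 : Stmt8R) - MonoidAlgebra.of ℤ (FreeGroup Bool) 1 ∈ I
    rw [map_one, sub_self]; exact I.zero_mem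
  mul_mem' := by
    intro g h hg hh
    show (1 : Stmt8R) - MonoidAlgebra.of ℤ (FreeGroup Bool) (g * h) ∈ I
    have e : (1 : Stmt8R) - MonoidAlgebra.of ℤ (FreeGroup Bool) (g*h)
        = op (MonoidAlgebra.of ℤ (FreeGroup Bool) h) • ((1:Stmt8R) - MonoidAlgebra.of ℤ _ g)
          + ((1:Stmt8R) - MonoidAlgebra.of ℤ _ h) := by
      rw [op_smul_eq_mul, map_mul, sub_mul, one_mul]; abel
    rw [e]
    exact I.add_mem (I.smul_mem _ hg) hh
  inv_mem' := by
    intro g hg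
    show (1 : Stmt8R) - MonoidAlgebra.of ℤ (FreeGroup Bool) g⁻¹ ∈ I
    have e : (1 : Stmt8R) - MonoidAlgebra.of ℤ (FreeGroup Bool) g⁻¹
        = -(op (MonoidAlgebra.of ℤ (FreeGroup Bool) g⁻¹) • ((1:Stmt8R) - MonoidAlgebra.of ℤ _ g)) := by
      rw [op_smul_eq_mul, sub_mul, one_mul, ← map_mul, mul_inv_cancel, map_one, neg_sub]
    rw [e]
    exact I.neg_mem (I.smul_mem _ hg)

@[simp] lemma stmt8D_mem (I : Submodule Stmt8Rᵐᵒᵖ Stmt8R) (g : FreeGroup Bool) :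
    g ∈ stmt8D I ↔ (1 : Stmt8R) - MonoidAlgebra.of ℤ (FreeGroup Bool) g ∈ I := Iff.rfl

lemma stmt8_mapDomain_sub {Q : Type*} (q : FreeGroup Bool → Q) (u v : Stmt8R) :
    MonoidAlgebra.mapDomain q (u - v) = MonoidAlgebra.mapDomain q u - MonoidAlgebra.mapDomain q v := by
  have := MonoidAlgebra.mapDomain_add q (u - v) v
  rw [sub_add_cancel] at this
  rw [this, add_sub_cancel_right]

lemma stmt8_mapDomain_comp {M' Q : Type*} (g : FreeGroup Bool → M') (f : M' → Q) (x : Stmt8R) :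
    MonoidAlgebra.mapDomain (f ∘ g) x = MonoidAlgebra.mapDomain f (MonoidAlgebra.mapDomain g x) :=
  congrArg MonoidAlgebra.ofCoeff Finsupp.mapDomain_comp

lemma stmt8_mul_single (y : Stmt8R) (g : FreeGroup Bool) (c : ℤ) :
    y * MonoidAlgebra.single g c = c • MonoidAlgebra.mapDomain (· * g) y := by
  induction y using MonoidAlgebra.induction_linear with
  | zero => simp
  | add f h hf hh => rw [add_mul, hf, hh, MonoidAlgebra.mapDomain_add, smul_add]
  | single a b =>
      show MonoidAlgebra.single a b * MonoidAlgebra.single g c = _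
      rw [MonoidAlgebra.single_mul_single, MonoidAlgebra.mapDomain_single, MonoidAlgebra.smul_single,
        smul_eq_mul, mul_comm]

lemma stmt8_span_le_ker (T : Set (FreeGroup Bool)) (y : Stmt8R)
    (hy : y ∈ Submodule.span Stmt8Rᵐᵒᵖ
      ((fun t => (1:Stmt8R) - MonoidAlgebra.of ℤ (FreeGroup Bool) t) '' T)) :
    MonoidAlgebra.mapDomain
      (Quotient.mk (QuotientGroup.rightRel (Subgroup.closure T)) : FreeGroup Bool → _) y = 0 := by
  set H := Subgroup.closure T with hH
  set q : FreeGroup Bool → Quotient (QuotientGroup.rightRel H) :=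
    Quotient.mk (QuotientGroup.rightRel H) with hq
  induction hy using Submodule.span_induction with
  | mem x hx =>
      obtain ⟨t, ht, rfl⟩ := hx
      show MonoidAlgebra.mapDomain q
        ((MonoidAlgebra.single 1 1 : Stmt8R) - (MonoidAlgebra.single t 1 : Stmt8R)) = 0
      rw [stmt8_mapDomain_sub]
      show MonoidAlgebra.mapDomain q (MonoidAlgebra.single 1 (1:ℤ)) - MonoidAlgebra.mapDomain q (MonoidAlgebra.single t (1:ℤ)) = 0
      rw [MonoidAlgebra.mapDomain_single, MonoidAlgebra.mapDomain_single]
      have : q t = q 1 := by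
        apply Quotient.sound
        have : (1 : FreeGroup Bool) * t⁻¹ ∈ H := by
          simpa using Subgroup.inv_mem H (Subgroup.subset_closure ht)
        exact (QuotientGroup.rightRel_apply).2 this
      rw [this, sub_self]
  | zero => simp
  | add u v _ _ hu hv => rw [MonoidAlgebra.mapDomain_add, hu, hv, add_zero]
  | smul r x _ hx =>
      have hr : r • x = x * r.unop := by rw [← op_unop r, op_smul_eq_mul, op_unop]
      rw [hr]
      induction r.unop using MonoidAlgebra.induction_linear with
      | zero => simp
      | add f h hf hh => rw [mul_add, MonoidAlgebra.mapDomain_add, hf, hh, add_zero]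
      | single g c =>
          have hcompat : ∀ u v : FreeGroup Bool,
              (QuotientGroup.rightRel H).r u v →
              (QuotientGroup.rightRel H).r (u * g) (v * g) := by
            intro u v huv
            have h1 := (QuotientGroup.rightRel_apply).1 huv
            refine (QuotientGroup.rightRel_apply).2 ?_
            have e : v * g * (u * g)⁻¹ = v * u⁻¹ := by group
            rw [e]; exact h1
          show MonoidAlgebra.mapDomain q (x * MonoidAlgebra.single g c) = 0
          rw [stmt8_mul_single, MonoidAlgebra.mapDomain_smul, ← stmt8_mapDomain_comp]
          have hcomp : q ∘ (· * g)
              = (Quotient.map (· * g) hcompat) ∘ q := rfl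
          rw [hcomp, stmt8_mapDomain_comp, hx, MonoidAlgebra.mapDomain_zero, smul_zero]

lemma stmt8_mem_closure_of_mem_span (T : Set (FreeGroup Bool)) (h : FreeGroup Bool)
    (hy : (1:Stmt8R) - MonoidAlgebra.of ℤ (FreeGroup Bool) h ∈ Submodule.span Stmt8Rᵐᵒᵖ
      ((fun t => (1:Stmt8R) - MonoidAlgebra.of ℤ (FreeGroup Bool) t) '' T)) :
    h ∈ Subgroup.closure T := by
  have h0 := stmt8_span_le_ker T _ hy
  set q : FreeGroup Bool → Quotient (QuotientGroup.rightRel (Subgroup.closure T)) :=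
    Quotient.mk (QuotientGroup.rightRel (Subgroup.closure T)) with hq
  have : (MonoidAlgebra.single (q 1) (1:ℤ) - MonoidAlgebra.single (q h) 1 : MonoidAlgebra ℤ _) = 0 := by
    rw [← MonoidAlgebra.mapDomain_single (f := q) (a := (1:FreeGroup Bool)) (r := (1:ℤ)),
      ← MonoidAlgebra.mapDomain_single (f := q) (a := h) (r := (1:ℤ)), ← stmt8_mapDomain_sub]
    exact h0
  by_contra hmem
  have hne : q h ≠ q 1 := by
    intro he
    have := (QuotientGroup.rightRel_apply).1 (Quotient.exact he)
    simp only [one_mul] at this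
    exact hmem (by simpa using Subgroup.inv_mem _ this)
  have h2 := congrArg (fun f => f.coeff (q 1)) this
  simp only [MonoidAlgebra.coeff_sub, MonoidAlgebra.coeff_single, MonoidAlgebra.coeff_zero,
    Finsupp.sub_apply, Finsupp.single_eq_same, Finsupp.single_eq_of_ne' hne,
    Finsupp.coe_zero, Pi.zero_apply] at h2
  omega
def stmt8S : Set (FreeGroup Bool) :=
  {FreeGroup.of true} ∪ {g | ∃ w : FreeGroup Bool, ∃ ε δ : ℤ,
    (ε = 1 ∨ ε = -1) ∧ (δ = 1 ∨ δ = -1) ∧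
    g = w * ((FreeGroup.of true)^ε * (FreeGroup.of false)^δ *
      (FreeGroup.of true)^(-ε) * (FreeGroup.of false)^(-δ)) * w⁻¹}

lemma stmt8_g_mem (n : ℕ) :
    (FreeGroup.of false)^n * FreeGroup.of true * ((FreeGroup.of false)^n)⁻¹
      ∈ Subgroup.closure stmt8S := by
  set a := FreeGroup.of true
  set b := FreeGroup.of false
  induction n with
  | zero => simpa using Subgroup.subset_closure (show a ∈ stmt8S from Or.inl rfl)
  | succ n ih =>
      have hc : (b^(n+1)) * (a^(1:ℤ) * b^(-1:ℤ) * a^(-(1:ℤ)) * b^(-(-1:ℤ))) * (b^(n+1))⁻¹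
          ∈ stmt8S := Or.inr ⟨b^(n+1), 1, -1, Or.inl rfl, Or.inr rfl, rfl⟩
      have h2 := mul_mem (Subgroup.subset_closure hc) ih
      have key : ((b^(n+1)) * (a^(1:ℤ) * b^(-1:ℤ) * a^(-(1:ℤ)) * b^(-(-1:ℤ))) * (b^(n+1))⁻¹)
          * (b^n * a * (b^n)⁻¹) = b^(n+1) * a * (b^(n+1))⁻¹ := by
        group
      rwa [key] at h2

lemma stmt8_right_eq_one {s : FreeGroup Bool} (hs : s ∈ stmt8S) :
    (stmt8Phi s).right = 1 := by
  have hr : ∀ x : FreeGroup Bool, (stmt8Phi x).right = rightHom (stmt8Phi x) := fun _ => rfl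
  rcases hs with h | ⟨w, ε, δ, hε, hδ, rfl⟩
  · rw [Set.mem_singleton_iff] at h
    subst h
    rw [stmt8Phi_a]; rfl
  · rw [hr]
    set r : FreeGroup Bool →* Multiplicative ℤ := rightHom.comp stmt8Phi with hrdef
    show r _ = 1
    rw [map_mul, map_mul, map_inv, map_mul, map_mul, map_mul, map_zpow, map_zpow,
      map_zpow, map_zpow]
    have : ∀ x y : Multiplicative ℤ, x * (y) * x⁻¹ = y := fun x y => by
      rw [mul_comm x y, mul_assoc, mul_inv_cancel, mul_one]
    rw [this, zpow_neg, zpow_neg, ← commutatorElement_def]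
    exact commutatorElement_eq_one_iff_commute.2 (Commute.all _ _)



theorem stmt_8 :
    letI G := FreeGroup Bool
    letI a : G := FreeGroup.of true
    letI b : G := FreeGroup.of false
    ¬ (Submodule.span (MonoidAlgebra ℤ G)ᵐᵒᵖ
        ({(1 : MonoidAlgebra ℤ G) - MonoidAlgebra.of ℤ G a} ∪
         {ξ : MonoidAlgebra ℤ G | ∃ w : G, ∃ ε δ : ℤ,
            (ε = 1 ∨ ε = -1) ∧ (δ = 1 ∨ δ = -1) ∧
            ξ = 1 - MonoidAlgebra.of ℤ G
              (w * (a ^ ε * b ^ δ * a ^ (-ε) * b ^ (-δ)) * w⁻¹)})).FG := by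
  classical
  intro hFG
  have hX : ({(1 : Stmt8R) - MonoidAlgebra.of ℤ (FreeGroup Bool) (FreeGroup.of true)} ∪
         {ξ : Stmt8R | ∃ w : FreeGroup Bool, ∃ ε δ : ℤ,
            (ε = 1 ∨ ε = -1) ∧ (δ = 1 ∨ δ = -1) ∧
            ξ = 1 - MonoidAlgebra.of ℤ (FreeGroup Bool)
              (w * ((FreeGroup.of true) ^ ε * (FreeGroup.of false) ^ δ *
                (FreeGroup.of true) ^ (-ε) * (FreeGroup.of false) ^ (-δ)) * w⁻¹)})
      = (fun s => (1:Stmt8R) - MonoidAlgebra.of ℤ (FreeGroup Bool) s) '' stmt8S := by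
    ext ξ
    constructor
    · rintro (h | ⟨w, ε, δ, hε, hδ, rfl⟩)
      · exact ⟨FreeGroup.of true, Or.inl rfl, h.symm⟩
      · exact ⟨_, Or.inr ⟨w, ε, δ, hε, hδ, rfl⟩, rfl⟩
    · rintro ⟨s, hs, rfl⟩
      rcases hs with h | ⟨w, ε, δ, hε, hδ, rfl⟩
      · rw [Set.mem_singleton_iff] at h; subst h; exact Or.inl rfl
      · exact Or.inr ⟨w, ε, δ, hε, hδ, rfl⟩
  rw [hX] at hFG
  set Xim := (fun s => (1:Stmt8R) - MonoidAlgebra.of ℤ (FreeGroup Bool) s) '' stmt8S with hXim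
  obtain ⟨V, hV⟩ := hFG
  -- find a finite subset of Xim spanning everything
  have hmem : ∀ v ∈ V, ∃ T : Finset Stmt8R, ↑T ⊆ Xim ∧ v ∈ Submodule.span Stmt8Rᵐᵒᵖ (T : Set Stmt8R) := by
    intro v hv
    have : v ∈ Submodule.span Stmt8Rᵐᵒᵖ Xim := by
      rw [← hV]; exact Submodule.subset_span hv
    exact Submodule.mem_span_finite_of_mem_span this
  choose F hF1 hF2 using hmem
  set X₀ : Finset Stmt8R := V.attach.biUnion (fun v => F v.1 v.2) with hX₀
  have hX₀sub : (X₀ : Set Stmt8R) ⊆ Xim := by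
    intro x hx
    simp only [hX₀, Finset.coe_biUnion, Set.mem_iUnion] at hx
    obtain ⟨v, hv, hx⟩ := hx
    exact hF1 v.1 v.2 hx
  have hle : Submodule.span Stmt8Rᵐᵒᵖ Xim ≤ Submodule.span Stmt8Rᵐᵒᵖ (X₀ : Set Stmt8R) := by
    rw [← hV, Submodule.span_le]
    intro v hv
    refine Submodule.span_mono ?_ (hF2 v hv)
    intro x hx
    simp only [hX₀, Finset.coe_biUnion, Set.mem_iUnion]
    exact ⟨⟨v, hv⟩, Finset.mem_attach _ _, hx⟩
  -- the finite set of group elements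
  set Tset : Set (FreeGroup Bool) :=
    {s | s ∈ stmt8S ∧ (1:Stmt8R) - MonoidAlgebra.of ℤ (FreeGroup Bool) s ∈ X₀} with hTset
  have hX₀Tim : (X₀ : Set Stmt8R)
      ⊆ (fun t => (1:Stmt8R) - MonoidAlgebra.of ℤ (FreeGroup Bool) t) '' Tset := by
    intro x hx
    obtain ⟨s, hs, rfl⟩ := hX₀sub hx
    exact ⟨s, ⟨hs, hx⟩, rfl⟩
  have hTfin : Tset.Finite := by
    have hinj : Set.InjOn (fun t => (1:Stmt8R) - MonoidAlgebra.of ℤ (FreeGroup Bool) t) Tset := by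
      intro u _ v _ huv
      exact MonoidAlgebra.of_injective (sub_right_injective huv)
    have him : ((fun t => (1:Stmt8R) - MonoidAlgebra.of ℤ (FreeGroup Bool) t) '' Tset).Finite :=
      (X₀.finite_toSet).subset (by
        rintro x ⟨s, hs, rfl⟩
        exact hs.2)
    exact Set.Finite.of_finite_image him hinj
  set T₀ : Finset (FreeGroup Bool) := hTfin.toFinset with hT₀
  have hT₀S : ∀ t ∈ T₀, t ∈ stmt8S := by
    intro t ht
    rw [hT₀, Set.Finite.mem_toFinset] at ht
    exact ht.1
  obtain ⟨n, hn⟩ := stmt8_exists_not_mem T₀ (fun t ht => stmt8_right_eq_one (hT₀S t ht))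
  apply hn
  have hg : (1:Stmt8R) - MonoidAlgebra.of ℤ (FreeGroup Bool)
      ((FreeGroup.of false)^n * FreeGroup.of true * ((FreeGroup.of false)^n)⁻¹)
      ∈ Submodule.span Stmt8Rᵐᵒᵖ
        ((fun t => (1:Stmt8R) - MonoidAlgebra.of ℤ (FreeGroup Bool) t) '' Tset) := by
    refine Submodule.span_mono hX₀Tim (hle ?_)
    -- 1 - of gₙ ∈ span Xim : via the subgroup stmt8D
    have hSsub : stmt8S ⊆ (stmt8D (Submodule.span Stmt8Rᵐᵒᵖ Xim) : Set (FreeGroup Bool)) := by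
      intro s hs
      exact (stmt8D_mem _ s).2 (Submodule.subset_span ⟨s, hs, rfl⟩)
    have hgd := (Subgroup.closure_le _).2 hSsub (stmt8_g_mem n)
    exact (stmt8D_mem _ _).1 hgd
  have := stmt8_mem_closure_of_mem_span Tset _ hg
  rwa [show (T₀ : Set (FreeGroup Bool)) = Tset from Set.Finite.coe_toFinset _]
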